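/- arXiv:2003.09111 — 4 statements merged into one kernel-verified Lean document; each statement's English description precedes it below -/
import Mathlib

section
/- Let C ≥ 1, T > 0 and B ≥ 0 be reals, let w : [0,T] → [0,∞) be integrable, and set A = ∫₀ᵀ w(t) dt and H = (B + 8C³B³A)·exp(4C³B²A). Assume 12C³H²·A ≤ log 2. Let F : ℕ → ([0,T] → [0,∞)) be a sequence of continuous functions such that F₀(t) ≤ B for all t ∈ [0,T], and such that for every k ≥ 0 and every t ∈ [0,T], F_{k+1}(t) ≤ C·exp(C·∫₀ᵗ w(s)·F_k(s)² ds)·(B + ∫₀ᵗ w(s)·F_k(s)³ ds). Then F_k(t) ≤ 2CH for every k ≥ 1 and every t ∈ [0,T]. -/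
open MeasureTheory intervalIntegral Set

lemma statement4_aux (T : ℝ) (w f : ℝ → ℝ) (hw : ∀ t ∈ Icc (0:ℝ) T, 0 ≤ w t)
    (hwint : IntegrableOn w (Icc (0:ℝ) T))
    (hf : ContinuousOn f (Icc (0:ℝ) T))
    (hf0 : ∀ s ∈ Icc (0:ℝ) T, 0 ≤ f s)
    (K : ℝ) (hK0 : 0 ≤ K) (hK : ∀ s ∈ Icc (0:ℝ) T, f s ≤ K)
    (t : ℝ) (ht : t ∈ Icc (0:ℝ) T) :
    0 ≤ (∫ s in (0:ℝ)..t, w s * f s) ∧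
      (∫ s in (0:ℝ)..t, w s * f s) ≤ K * ∫ s in (0:ℝ)..T, w s := by
  obtain ⟨ht0, htT⟩ := ht
  have hsub : Ioc (0:ℝ) t ⊆ Icc 0 T := fun x hx => ⟨hx.1.le, hx.2.trans htT⟩
  have hsubT : Ioc (0:ℝ) T ⊆ Icc 0 T := Ioc_subset_Icc_self
  -- integrability of w * f on Icc 0 T
  have hint : IntegrableOn (fun s => w s * f s) (Icc (0:ℝ) T) := by
    have h1 : IntegrableOn (fun s => f s * w s) (Icc (0:ℝ) T) := by
      refine Integrable.bdd_mul hwint (c := K) (hf.aestronglyMeasurable measurableSet_Icc) ?_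
      refine (ae_restrict_iff' measurableSet_Icc).2 (Filter.Eventually.of_forall fun x hx => ?_)
      rw [Real.norm_eq_abs, abs_of_nonneg (hf0 x hx)]
      exact hK x hx
    exact h1.congr_fun (fun x _ => mul_comm _ _) measurableSet_Icc
  have hIt : IntervalIntegrable (fun s => w s * f s) volume 0 t :=
    (intervalIntegrable_iff_integrableOn_Ioc_of_le ht0).2 (hint.mono_set hsub)
  have hIKw : IntervalIntegrable (fun s => K * w s) volume 0 t :=
    (intervalIntegrable_iff_integrableOn_Ioc_of_le ht0).2
      (((hwint.mono_set hsub)).const_mul K)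
  have hIwT : IntervalIntegrable w volume 0 T :=
    (intervalIntegrable_iff_integrableOn_Ioc_of_le (ht0.trans htT)).2 (hwint.mono_set hsubT)
  constructor
  · exact intervalIntegral.integral_nonneg ht0 fun u hu =>
      mul_nonneg (hw u ⟨hu.1, hu.2.trans htT⟩) (hf0 u ⟨hu.1, hu.2.trans htT⟩)
  · calc (∫ s in (0:ℝ)..t, w s * f s) ≤ ∫ s in (0:ℝ)..t, K * w s := by
          refine intervalIntegral.integral_mono_on ht0 hIt hIKw fun x hx => ?_
          have hx' : x ∈ Icc (0:ℝ) T := ⟨hx.1, hx.2.trans htT⟩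
          calc w x * f x ≤ w x * K := mul_le_mul_of_nonneg_left (hK x hx') (hw x hx')
            _ = K * w x := mul_comm _ _
    _ = K * ∫ s in (0:ℝ)..t, w s := intervalIntegral.integral_const_mul _ _
    _ ≤ K * ∫ s in (0:ℝ)..T, w s := by
          refine mul_le_mul_of_nonneg_left ?_ hK0
          refine intervalIntegral.integral_mono_interval le_rfl ht0 htT ?_ hIwT
          exact (ae_restrict_iff' measurableSet_Ioc).2
            (Filter.Eventually.of_forall fun x hx => hw x (hsubT hx))

/-- the uniform-bound iteration of Section 3.2, inequalities (3.9)–(3.14):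
with `A = ∫₀ᵀ w`, `H = (B + 8C³B³A)exp(4C³B²A)` and `12C³H²A ≤ log 2`, any sequence of
continuous nonnegative functions with `F₀ ≤ B` satisfying the iterative inequality
`F_{k+1}(t) ≤ C·exp(C∫₀ᵗ w F_k²)·(B + ∫₀ᵗ w F_k³)` obeys `F_k ≤ 2CH` for all `k ≥ 1`. -/
theorem statement4 (C T B : ℝ) (hC : 1 ≤ C) (hT : 0 < T) (hB : 0 ≤ B)
    (w : ℝ → ℝ) (hw : ∀ t ∈ Icc (0:ℝ) T, 0 ≤ w t)
    (hwint : IntegrableOn w (Icc (0:ℝ) T))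
    (A H : ℝ)
    (hA : A = ∫ t in (0:ℝ)..T, w t)
    (hH : H = (B + 8 * C ^ 3 * B ^ 3 * A) * Real.exp (4 * C ^ 3 * B ^ 2 * A))
    (hsmall : 12 * C ^ 3 * H ^ 2 * A ≤ Real.log 2)
    (F : ℕ → ℝ → ℝ)
    (hFcont : ∀ k, ContinuousOn (F k) (Icc (0:ℝ) T))
    (hFnonneg : ∀ k, ∀ t ∈ Icc (0:ℝ) T, 0 ≤ F k t)
    (hF0 : ∀ t ∈ Icc (0:ℝ) T, F 0 t ≤ B)
    (hrec : ∀ k, ∀ t ∈ Icc (0:ℝ) T,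
      F (k + 1) t ≤ C * Real.exp (C * ∫ s in (0:ℝ)..t, w s * (F k s) ^ 2)
        * (B + ∫ s in (0:ℝ)..t, w s * (F k s) ^ 3)) :
    ∀ k, 1 ≤ k → ∀ t ∈ Icc (0:ℝ) T, F k t ≤ 2 * C * H := by
  have hC0 : (0:ℝ) ≤ C := le_trans zero_le_one hC
  have hA0 : 0 ≤ A := by
    rw [hA]; exact intervalIntegral.integral_nonneg hT.le hw
  have hBH : B ≤ H := by
    rw [hH]
    have h1 : B ≤ B + 8 * C ^ 3 * B ^ 3 * A := le_add_of_nonneg_right (by positivity)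
    have h2 : (1:ℝ) ≤ Real.exp (4 * C ^ 3 * B ^ 2 * A) := Real.one_le_exp (by positivity)
    calc B ≤ B + 8 * C ^ 3 * B ^ 3 * A := h1
      _ ≤ (B + 8 * C ^ 3 * B ^ 3 * A) * Real.exp (4 * C ^ 3 * B ^ 2 * A) :=
        le_mul_of_one_le_right (hB.trans h1) h2
  have hH0 : 0 ≤ H := hB.trans hBH
  -- general iteration step
  have step : ∀ k (K : ℝ), 0 ≤ K → (∀ s ∈ Icc (0:ℝ) T, F k s ≤ K) →
      ∀ t ∈ Icc (0:ℝ) T,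
        F (k + 1) t ≤ C * Real.exp (C * (K ^ 2 * A)) * (B + K ^ 3 * A) := by
    intro k K hK0 hKb t ht
    have h2 := statement4_aux T w (fun s => F k s ^ 2) hw hwint ((hFcont k).pow 2)
      (fun s _ => sq_nonneg _) (K ^ 2) (by positivity)
      (fun s hs => pow_le_pow_left₀ (hFnonneg k s hs) (hKb s hs) 2) t ht
    have h3 := statement4_aux T w (fun s => F k s ^ 3) hw hwint ((hFcont k).pow 3)
      (fun s hs => pow_nonneg (hFnonneg k s hs) 3) (K ^ 3) (by positivity)
      (fun s hs => pow_le_pow_left₀ (hFnonneg k s hs) (hKb s hs) 3) t ht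
    rw [← hA] at h2 h3
    refine (hrec k t ht).trans ?_
    have e1 : Real.exp (C * ∫ s in (0:ℝ)..t, w s * F k s ^ 2) ≤ Real.exp (C * (K ^ 2 * A)) :=
      Real.exp_le_exp.2 (mul_le_mul_of_nonneg_left h2.2 hC0)
    have e2 : B + (∫ s in (0:ℝ)..t, w s * F k s ^ 3) ≤ B + K ^ 3 * A :=
      add_le_add_right h3.2 B
    have hpos : 0 ≤ B + ∫ s in (0:ℝ)..t, w s * F k s ^ 3 := add_nonneg hB h3.1
    exact mul_le_mul (mul_le_mul_of_nonneg_left e1 hC0) e2 hpos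
      (mul_nonneg hC0 (Real.exp_nonneg _))
  -- base inequality
  have base : C * Real.exp (C * (B ^ 2 * A)) * (B + B ^ 3 * A) ≤ 2 * C * H := by
    have hc : C ≤ 4 * C ^ 3 := by nlinarith [sq_nonneg (C - 1), sq_nonneg (C + 1)]
    have hc8 : (1:ℝ) ≤ 8 * C ^ 3 := by nlinarith [sq_nonneg (C - 1), sq_nonneg (C + 1)]
    have h1 : C * (B ^ 2 * A) ≤ 4 * C ^ 3 * B ^ 2 * A := by
      have := mul_le_mul_of_nonneg_right hc (show (0:ℝ) ≤ B ^ 2 * A by positivity)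
      linarith [this]
    have h2 : B + B ^ 3 * A ≤ B + 8 * C ^ 3 * B ^ 3 * A := by
      have := mul_le_mul_of_nonneg_right hc8 (show (0:ℝ) ≤ B ^ 3 * A by positivity)
      linarith [this]
    calc C * Real.exp (C * (B ^ 2 * A)) * (B + B ^ 3 * A)
        ≤ C * Real.exp (4 * C ^ 3 * B ^ 2 * A) * (B + 8 * C ^ 3 * B ^ 3 * A) := by
          refine mul_le_mul (mul_le_mul_of_nonneg_left (Real.exp_le_exp.2 h1) hC0) h2
            (by positivity) (by positivity)
      _ = C * H := by rw [hH]; ring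
      _ ≤ 2 * C * H := by nlinarith [mul_nonneg hC0 hH0]
  -- step inequality
  have stepineq : C * Real.exp (C * ((2 * C * H) ^ 2 * A)) * (B + (2 * C * H) ^ 3 * A)
      ≤ 2 * C * H := by
    set x := 4 * C ^ 3 * H ^ 2 * A with hx_def
    have hx0 : 0 ≤ x := by positivity
    have hx : 3 * x ≤ Real.log 2 := by
      have : 3 * x = 12 * C ^ 3 * H ^ 2 * A := by rw [hx_def]; ring
      linarith
    have harg : C * ((2 * C * H) ^ 2 * A) = x := by rw [hx_def]; ring
    have hcube : (2 * C * H) ^ 3 * A = 2 * H * x := by rw [hx_def]; ring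
    rw [harg, hcube]
    have key : Real.exp x * (B + 2 * H * x) ≤ 2 * H := by
      have h1 : B + 2 * H * x ≤ H * (1 + 2 * x) := by nlinarith
      have h2 : (1:ℝ) + 2 * x ≤ Real.exp (2 * x) := by
        have := Real.add_one_le_exp (2 * x); linarith
      calc Real.exp x * (B + 2 * H * x) ≤ Real.exp x * (H * (1 + 2 * x)) :=
            mul_le_mul_of_nonneg_left h1 (Real.exp_nonneg _)
        _ ≤ Real.exp x * (H * Real.exp (2 * x)) :=
            mul_le_mul_of_nonneg_left (mul_le_mul_of_nonneg_left h2 hH0) (Real.exp_nonneg _)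
        _ = H * Real.exp (3 * x) := by
            rw [show (3:ℝ) * x = x + 2 * x by ring, Real.exp_add]; ring
        _ ≤ H * 2 := by
            refine mul_le_mul_of_nonneg_left ?_ hH0
            calc Real.exp (3 * x) ≤ Real.exp (Real.log 2) := Real.exp_le_exp.2 hx
              _ = 2 := Real.exp_log two_pos
        _ = 2 * H := by ring
    calc C * Real.exp x * (B + 2 * H * x) = C * (Real.exp x * (B + 2 * H * x)) := by ring
      _ ≤ C * (2 * H) := mul_le_mul_of_nonneg_left key hC0
      _ = 2 * C * H := by ring
  have main : ∀ k, ∀ t ∈ Icc (0:ℝ) T, F (k + 1) t ≤ 2 * C * H := by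
    intro k
    induction k with
    | zero => exact fun t ht => (step 0 B hB hF0 t ht).trans base
    | succ n ih => exact fun t ht =>
        (step (n + 1) (2 * C * H) (mul_nonneg (by linarith) hH0) ih t ht).trans stepineq
  intro k hk t ht
  obtain ⟨k, rfl⟩ := Nat.exists_eq_add_of_le hk
  have := main k t ht
  simpa [Nat.add_comm] using this
end

section
/- For every real K > 0 and every real x with 0 < x ≤ 1, x·log(e + K/x) ≤ log(e + K)·(1 − log x). -/
/-- for `K > 0` and `0 < x ≤ 1`,
`x·log(e + K/x) ≤ log(e + K)·(1 − log x)`. -/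
theorem statement7 (K x : ℝ) (hK : 0 < K) (hx0 : 0 < x) (hx1 : x ≤ 1) :
    x * Real.log (Real.exp 1 + K / x) ≤ Real.log (Real.exp 1 + K) * (1 - Real.log x) := by
  have he : (0:ℝ) < Real.exp 1 := Real.exp_pos 1
  have h1 : Real.exp 1 + K / x ≤ (Real.exp 1 + K) / x := by
    rw [add_div]
    have : Real.exp 1 ≤ Real.exp 1 / x := by
      rw [le_div_iff₀ hx0]; nlinarith
    linarith
  have hlog : Real.log (Real.exp 1 + K / x) ≤ Real.log (Real.exp 1 + K) - Real.log x := by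
    rw [← Real.log_div (by positivity) hx0.ne']
    exact Real.log_le_log (by positivity) h1
  have hL : 1 ≤ Real.log (Real.exp 1 + K) := by
    have := Real.log_le_log he (le_add_of_nonneg_right hK.le)
    rwa [Real.log_exp] at this
  have hlx : Real.log x ≤ 0 := Real.log_nonpos hx0.le hx1
  nlinarith [mul_le_mul_of_nonneg_left hlog hx0.le]
end

section
/- For every real K > 0 and all reals a, b with 0 < a ≤ b ≤ K, ∫ₐᵇ dr / (r·log(e + K/r)) ≥ (1/log(e+1))·log( (1 − log(a/K)) / (1 − log(b/K)) ). (Note 0 < a/K ≤ b/K ≤ 1, so both 1 − log(a/K) and 1 − log(b/K) are ≥ 1 and the right-hand side is ≥ 0.) -/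
open Real intervalIntegral

/-- lower bound for the Osgood integral, proof of Lemma 4.1: for `K > 0`
and `0 < a ≤ b ≤ K`,
`∫ₐᵇ dr/(r·log(e + K/r)) ≥ (1/log(e+1))·log((1 − log(a/K))/(1 − log(b/K)))`. -/
theorem statement9 (K a b : ℝ) (hK : 0 < K) (ha : 0 < a) (hab : a ≤ b) (hbK : b ≤ K) :
    (1 / Real.log (Real.exp 1 + 1)) *
        Real.log ((1 - Real.log (a / K)) / (1 - Real.log (b / K)))
      ≤ ∫ r in a..b, 1 / (r * Real.log (Real.exp 1 + K / r)) := by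
  set L := Real.log (Real.exp 1 + 1) with hLdef
  have hL1 : 1 < L := by
    have h := Real.log_exp 1
    calc (1:ℝ) = Real.log (Real.exp 1) := h.symm
    _ < L := Real.log_lt_log (Real.exp_pos 1) (by linarith)
  have hLpos : (0:ℝ) < L := by linarith
  -- basic facts on [a,b]
  have key : ∀ r ∈ Set.Icc a b,
      0 < r ∧ r ≤ K ∧ 0 ≤ -Real.log (r / K) ∧ 0 < Real.log (Real.exp 1 + K / r) := by
    intro r hr
    have hr0 : 0 < r := lt_of_lt_of_le ha hr.1
    have hrK : r ≤ K := le_trans hr.2 hbK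
    have hlog : Real.log (r / K) ≤ 0 :=
      Real.log_nonpos (by positivity) (by rw [div_le_one hK]; exact hrK)
    have hpos : 0 < Real.log (Real.exp 1 + K / r) := by
      have : (1:ℝ) < Real.exp 1 + K / r := by
        have := Real.add_one_le_exp 1
        have : (1:ℝ) < Real.exp 1 := by nlinarith [Real.add_one_le_exp 1]
        have hKr : 0 < K / r := by positivity
        linarith
      exact Real.log_pos this
    exact ⟨hr0, hrK, by linarith, hpos⟩
  -- the comparison function
  set g' : ℝ → ℝ := fun r => 1 / (L * (r * (1 - Real.log (r / K)))) with hg'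
  -- continuity hence integrability
  have hcontf : ContinuousOn (fun r => 1 / (r * Real.log (Real.exp 1 + K / r)))
      (Set.Icc a b) := by
    apply ContinuousOn.div continuousOn_const
    · apply ContinuousOn.mul continuousOn_id
      apply ContinuousOn.log
      · exact continuousOn_const.add (continuousOn_const.div continuousOn_id
          (fun r hr => (key r hr).1.ne'))
      · intro r hr
        have := (key r hr).1
        positivity
    · intro r hr
      have := (key r hr).1
      have := (key r hr).2.2.2
      positivity
  have hcontg : ContinuousOn g' (Set.Icc a b) := by
    apply ContinuousOn.div continuousOn_const
    · apply ContinuousOn.mul continuousOn_const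
      apply ContinuousOn.mul continuousOn_id
      apply ContinuousOn.sub continuousOn_const
      apply ContinuousOn.log
      · exact continuousOn_id.div continuousOn_const (fun _ _ => hK.ne')
      · intro r hr; exact ne_of_gt (div_pos (key r hr).1 hK)
    · intro r hr
      obtain ⟨h1, h2, h3, h4⟩ := key r hr
      have : 0 < 1 - Real.log (r / K) := by linarith
      positivity
  have hintf : IntervalIntegrable (fun r => 1 / (r * Real.log (Real.exp 1 + K / r)))
      MeasureTheory.volume a b := hcontf.intervalIntegrable_of_Icc hab
  have hintg : IntervalIntegrable g' MeasureTheory.volume a b :=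
    hcontg.intervalIntegrable_of_Icc hab
  -- pointwise bound
  have hptwise : ∀ r ∈ Set.Icc a b,
      g' r ≤ 1 / (r * Real.log (Real.exp 1 + K / r)) := by
    intro r hr
    obtain ⟨hr0, hrK, hlogn, hlogpos⟩ := key r hr
    have hden1 : 0 < r * Real.log (Real.exp 1 + K / r) := by positivity
    apply one_div_le_one_div_of_le hden1
    have hKr1 : 1 ≤ K / r := (one_le_div hr0).2 hrK
    have hlogt : 0 ≤ Real.log (K / r) := Real.log_nonneg hKr1
    have hrw : Real.log (r / K) = -Real.log (K / r) := by
      rw [← Real.log_inv]; congr 1; field_simp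
    have hkey : Real.log (Real.exp 1 + K / r) ≤ L * (1 + Real.log (K / r)) := by
      have h1 : Real.exp 1 + K / r ≤ (Real.exp 1 + 1) * (K / r) := by
        nlinarith [Real.exp_pos 1]
      have h2 : Real.log (Real.exp 1 + K / r) ≤ Real.log ((Real.exp 1 + 1) * (K / r)) :=
        Real.log_le_log (by positivity) h1
      have h3 : Real.log ((Real.exp 1 + 1) * (K / r)) = L + Real.log (K / r) :=
        Real.log_mul (by positivity) (by positivity)
      nlinarith
    calc r * Real.log (Real.exp 1 + K / r) ≤ r * (L * (1 + Real.log (K / r))) := by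
          exact mul_le_mul_of_nonneg_left hkey hr0.le
    _ = L * (r * (1 - Real.log (r / K))) := by rw [hrw]; ring
  -- FTC for g'
  set G : ℝ → ℝ := fun r => -(1 / L) * Real.log (1 - Real.log (r / K)) with hG
  have hderiv : ∀ r ∈ Set.uIcc a b, HasDerivAt G (g' r) r := by
    intro r hr
    rw [Set.uIcc_of_le hab] at hr
    obtain ⟨hr0, hrK, hlogn, _⟩ := key r hr
    have h1 : HasDerivAt (fun x => Real.log (x / K)) (1 / r) r := by
      have : HasDerivAt (fun x => Real.log x - Real.log K) (1 / r) r := by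
        simpa using (Real.hasDerivAt_log hr0.ne').sub_const (Real.log K)
      apply this.congr_of_eventuallyEq
      filter_upwards [eventually_gt_nhds hr0] with x hx
      rw [Real.log_div hx.ne' hK.ne']
    have h2 : HasDerivAt (fun x => 1 - Real.log (x / K)) (-(1 / r)) r :=
      h1.const_sub 1
    have hne : 1 - Real.log (r / K) ≠ 0 := by linarith
    have h3 : HasDerivAt (fun x => Real.log (1 - Real.log (x / K)))
        ((1 - Real.log (r / K))⁻¹ * (-(1 / r))) r :=
      by have h := (Real.hasDerivAt_log hne).comp r h2; exact h
    have h4 := h3.const_mul (-(1 / L))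
    convert h4 using 1
    · rfl
    · rfl
    rw [hg']
    field_simp
  have hint : ∫ r in a..b, g' r = G b - G a :=
    intervalIntegral.integral_eq_sub_of_hasDerivAt hderiv hintg
  -- value of G b - G a
  have hlogA : Real.log (a / K) ≤ 0 :=
    Real.log_nonpos (by positivity) (by rw [div_le_one hK]; linarith)
  have hb : 0 < b := lt_of_lt_of_le ha hab
  have hlogB : Real.log (b / K) ≤ 0 :=
    Real.log_nonpos (by positivity) (by rw [div_le_one hK]; exact hbK)
  have hA : (0:ℝ) < 1 - Real.log (a / K) := by linarith
  have hB : (0:ℝ) < 1 - Real.log (b / K) := by linarith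
  have hval : G b - G a = (1 / L) *
      Real.log ((1 - Real.log (a / K)) / (1 - Real.log (b / K))) := by
    rw [hG, Real.log_div hA.ne' hB.ne']
    ring
  calc (1 / L) * Real.log ((1 - Real.log (a / K)) / (1 - Real.log (b / K)))
      = ∫ r in a..b, g' r := by rw [hint, hval]
    _ ≤ ∫ r in a..b, 1 / (r * Real.log (Real.exp 1 + K / r)) :=
        intervalIntegral.integral_mono_on hab hintg hintf hptwise
end

section
/- There is an absolute constant C > 0 with the following property: for every s ∈ ℝ, every δ > 0, every sequence a : ℕ → [0,∞), and all reals M, M' with 0 < M ≤ M', if 2^{q·s}·a_q ≤ M and 2^{q·(s+δ)}·a_q ≤ M' for every q ∈ ℕ, then Σ_{q∈ℕ} 2^{q·s}·a_q ≤ C·((1+δ)/δ)·M·(1 + log(M'/M)). -/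
/-- sequence-level logarithmic interpolation inequality, Lemma 3.3:
there is an absolute constant `C > 0` such that whenever `2^{qs}a_q ≤ M` and
`2^{q(s+δ)}a_q ≤ M'` for all `q`, with `0 < M ≤ M'` and `δ > 0`, one has
`Σ_q 2^{qs}a_q ≤ C((1+δ)/δ)·M·(1 + log(M'/M))`. -/
theorem statement15 :
    ∃ C : ℝ, 0 < C ∧
      ∀ (s δ : ℝ), 0 < δ →
      ∀ (a : ℕ → ℝ), (∀ q, 0 ≤ a q) →
      ∀ (M M' : ℝ), 0 < M → M ≤ M' →
      (∀ q : ℕ, (2 : ℝ) ^ ((q : ℝ) * s) * a q ≤ M) →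
      (∀ q : ℕ, (2 : ℝ) ^ ((q : ℝ) * (s + δ)) * a q ≤ M') →
      (∑' q : ℕ, (2 : ℝ) ^ ((q : ℝ) * s) * a q)
        ≤ C * ((1 + δ) / δ) * M * (1 + Real.log (M' / M)) := by
  refine ⟨10, by norm_num, ?_⟩
  intro s δ hδ a ha M M' hM hMM' h1 h2
  have hM' : 0 < M' := lt_of_lt_of_le hM hMM'
  set L : ℝ := Real.log (M' / M) with hLdef
  have hL0 : 0 ≤ L := Real.log_nonneg (by rw [le_div_iff₀ hM]; linarith)
  have hl2 : 0 < Real.log 2 := Real.log_pos one_lt_two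
  set t : ℝ := δ * Real.log 2 with htdef
  have ht0 : 0 < t := mul_pos hδ hl2
  set Q : ℕ := ⌈L / t⌉₊ with hQdef
  set c : ℝ := Real.exp (-t) with hcdef
  have hc0 : 0 < c := Real.exp_pos _
  have hc1 : c < 1 := Real.exp_lt_one_iff.mpr (by linarith)
  set b : ℕ → ℝ := fun q => (2 : ℝ) ^ ((q : ℝ) * s) * a q with hbdef
  have hb0 : ∀ q, 0 ≤ b q := fun q =>
    mul_nonneg (Real.rpow_nonneg (by norm_num) _) (ha q)
  -- b q ≤ M' * c^q
  have hbc : ∀ q : ℕ, b q ≤ M' * c ^ q := by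
    intro q
    have hcq : c ^ q = (2 : ℝ) ^ (-((q : ℝ) * δ)) := by
      rw [hcdef, ← Real.exp_nat_mul, Real.rpow_def_of_pos (by norm_num : (0:ℝ) < 2)]
      congr 1
      rw [htdef]; ring
    have hsplit : (2 : ℝ) ^ ((q : ℝ) * s) =
        (2 : ℝ) ^ (-((q : ℝ) * δ)) * (2 : ℝ) ^ ((q : ℝ) * (s + δ)) := by
      rw [← Real.rpow_add (by norm_num : (0:ℝ) < 2)]
      ring_nf
    have hpos : (0:ℝ) ≤ (2 : ℝ) ^ (-((q : ℝ) * δ)) := Real.rpow_nonneg (by norm_num) _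
    calc b q = (2 : ℝ) ^ (-((q : ℝ) * δ)) * ((2 : ℝ) ^ ((q : ℝ) * (s + δ)) * a q) := by
          rw [hbdef]; dsimp only; rw [hsplit]; ring
      _ ≤ (2 : ℝ) ^ (-((q : ℝ) * δ)) * M' := by
          exact mul_le_mul_of_nonneg_left (h2 q) hpos
      _ = M' * c ^ q := by rw [hcq]; ring
  have hgsum : Summable (fun q : ℕ => M' * c ^ q) :=
    (summable_geometric_of_lt_one hc0.le hc1).mul_left M'
  have hsum : Summable b := Summable.of_nonneg_of_le hb0 hbc hgsum
  -- split the sum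
  have hsplit := hsum.sum_add_tsum_nat_add (Q + 1)
  -- head bound
  have hhead : (∑ i ∈ Finset.range (Q + 1), b i) ≤ (Q + 1 : ℕ) * M := by
    calc (∑ i ∈ Finset.range (Q + 1), b i) ≤ ∑ i ∈ Finset.range (Q + 1), M :=
          Finset.sum_le_sum fun i _ => h1 i
      _ = (Q + 1 : ℕ) * M := by simp [mul_comm]
  -- tail bound
  have htail1 : (∑' i : ℕ, b (i + (Q + 1))) ≤ ∑' i : ℕ, M' * c ^ (i + (Q + 1)) := by
    refine Summable.tsum_le_tsum (fun i => hbc _) (hsum.comp_injective (add_left_injective _))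
      (hgsum.comp_injective (add_left_injective _))
  have htail2 : (∑' i : ℕ, M' * c ^ (i + (Q + 1))) = M' * c ^ (Q + 1) * (1 - c)⁻¹ := by
    have : ∀ i : ℕ, M' * c ^ (i + (Q + 1)) = (M' * c ^ (Q + 1)) * c ^ i := by
      intro i; rw [pow_add]; ring
    rw [tsum_congr this, tsum_mul_left, tsum_geometric_of_lt_one hc0.le hc1]
  -- M' * c^(Q+1) ≤ M
  have hMc : M' * c ^ (Q + 1) ≤ M := by
    have hQge : L / t ≤ ((Q : ℝ) + 1) := le_trans (Nat.le_ceil _) (by push_cast; linarith)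
    have h1' : L ≤ ((Q : ℝ) + 1) * t := by
      rw [div_le_iff₀ ht0] at hQge; linarith
    have hcQ : c ^ (Q + 1) = Real.exp (-(((Q : ℝ) + 1) * t)) := by
      rw [hcdef, ← Real.exp_nat_mul]; congr 1; push_cast; ring
    have : c ^ (Q + 1) ≤ Real.exp (-L) := by
      rw [hcQ]; exact Real.exp_le_exp.mpr (by linarith)
    have hexpL : Real.exp (-L) = M / M' := by
      rw [hLdef, Real.exp_neg, Real.exp_log (div_pos hM' hM)]
      rw [inv_div]
    calc M' * c ^ (Q + 1) ≤ M' * (M / M') := by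
          exact mul_le_mul_of_nonneg_left (by rw [← hexpL]; exact this) hM'.le
      _ = M := by field_simp
  -- (1-c)⁻¹ ≤ (1+t)/t
  have hinv : (1 - c)⁻¹ ≤ (1 + t) / t := by
    have hexp : c ≤ (1 + t)⁻¹ := by
      rw [hcdef, Real.exp_neg]
      exact inv_anti₀ (by linarith) (by linarith [Real.add_one_le_exp t])
    have h1c : t / (1 + t) ≤ 1 - c := by
      have : 1 - (1 + t)⁻¹ = t / (1 + t) := by field_simp; ring
      linarith [this ▸ sub_le_sub_left hexp 1]
    have hpos : 0 < t / (1 + t) := div_pos ht0 (by linarith)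
    calc (1 - c)⁻¹ ≤ (t / (1 + t))⁻¹ := inv_anti₀ hpos h1c
      _ = (1 + t) / t := by rw [inv_div]
  -- Q bound
  have hQle : ((Q : ℝ) + 1) ≤ L / t + 2 := by
    have := Nat.ceil_lt_add_one (div_nonneg hL0 ht0.le)
    have : (Q : ℝ) < L / t + 1 := by exact_mod_cast this
    linarith
  -- combine
  have hS : (∑' q : ℕ, b q) ≤ ((Q : ℝ) + 1) * M + M * ((1 + t) / t) := by
    rw [← hsplit]
    push_cast at hhead ⊢
    have htail : (∑' i : ℕ, b (i + (Q + 1))) ≤ M * ((1 + t) / t) := by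
      calc (∑' i : ℕ, b (i + (Q + 1))) ≤ M' * c ^ (Q + 1) * (1 - c)⁻¹ := by
            rw [← htail2]; exact htail1
        _ ≤ M * ((1 + t) / t) := by
            apply mul_le_mul hMc hinv (inv_nonneg.mpr (by linarith)) hM.le
    linarith
  -- final numeric estimate
  have hfinal : ((Q : ℝ) + 1) * M + M * ((1 + t) / t) ≤
      10 * ((1 + δ) / δ) * M * (1 + L) := by
    have key : (L / t + 2) + (1 + t) / t ≤ 10 * ((1 + δ) / δ) * (1 + L) := by
      have hl2' : (1:ℝ)/2 ≤ Real.log 2 := by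
        have := Real.log_two_gt_d9; linarith
      have e1 : (L + 1) / t ≤ 2 * ((1 + L) / δ) := by
        rw [mul_div_assoc', div_le_div_iff₀ ht0 hδ, htdef]
        nlinarith [mul_nonneg (mul_nonneg hδ.le (by linarith : (0:ℝ) ≤ 1 + L))
          (by linarith : (0:ℝ) ≤ 2 * Real.log 2 - 1)]
      have e2 : (1 + L) / δ ≤ ((1 + δ) / δ) * (1 + L) := by
        rw [div_mul_eq_mul_div, div_le_div_iff₀ hδ hδ]
        nlinarith [mul_nonneg (mul_pos hδ hδ).le (by linarith : (0:ℝ) ≤ 1 + L)]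
      have e3 : (1:ℝ) ≤ ((1 + δ) / δ) * (1 + L) := by
        rw [div_mul_eq_mul_div, le_div_iff₀ hδ]
        nlinarith [mul_nonneg hδ.le hL0]
      have heq : (L / t + 2) + (1 + t) / t = (L + 1) / t + 3 := by
        field_simp; ring
      rw [heq]
      linarith
    calc ((Q : ℝ) + 1) * M + M * ((1 + t) / t)
        ≤ (L / t + 2) * M + M * ((1 + t) / t) := by
          exact add_le_add_left (mul_le_mul_of_nonneg_right hQle hM.le) _
      _ = ((L / t + 2) + (1 + t) / t) * M := by ring
      _ ≤ (10 * ((1 + δ) / δ) * (1 + L)) * M :=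
          mul_le_mul_of_nonneg_right key hM.le
      _ = 10 * ((1 + δ) / δ) * M * (1 + L) := by ring
  exact le_trans hS hfinal
end
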